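/- Let q > 0, q ≠ 1. For a half-integer l ≥ 0, define the (2l+1)×(2l+1) matrix σ with entries indexed by m,n ∈ {−l,…,l}: σ_{mn} = √([l−n]_q [l+n+1]_q) if m = n+1 and 0 otherwise, where [x]_q = (q^x − q^{−x})/(q − q^{−1}). Then the weighted Hilbert–Schmidt norm ‖σ‖²_{HS,q} := ∑_{m=−l}^{l} q^{2m} ∑_{n=−l}^{l} |σ_{mn}|² satisfies ‖σ‖²_{HS,q} ≤ C [2l+1]_q² for a constant C depending only on q. -/

import Mathlib

/-- The q-integer `[x]_q = (q^x - q^{-x})/(q - q⁻¹)`. -/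
noncomputable def qint (q x : ℝ) : ℝ := (q ^ x - q ^ (-x)) / (q - q⁻¹)

open Real

lemma qq_ne {q : ℝ} (hq : 0 < q) (hq1 : q ≠ 1) : q - q⁻¹ ≠ 0 := by
  intro h
  have h2 : q * q = 1 := by field_simp at h; nlinarith
  exact hq1 (by nlinarith)

lemma qint_nonneg {q : ℝ} (hq : 0 < q) {x : ℝ} (hx : 0 ≤ x) : 0 ≤ qint q x := by
  unfold qint
  rcases le_total 1 q with h | h
  · apply div_nonneg
    · have := Real.rpow_le_rpow_of_exponent_le h (show -x ≤ x by linarith)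
      linarith
    · have h1 : q⁻¹ ≤ 1 := inv_le_one_of_one_le₀ h
      linarith
  · apply div_nonneg_of_nonpos
    · have := Real.rpow_le_rpow_of_exponent_ge hq h (show -x ≤ x by linarith)
      linarith
    · have h1 : 1 ≤ q⁻¹ := (one_le_inv₀ hq).mpr h
      linarith

lemma qint_mul_le {q : ℝ} (hq : 0 < q) (hq1 : q ≠ 1) (a b : ℝ) :
    qint q a * qint q b ≤ (q ^ (a + b) + q ^ (-(a + b))) / (q - q⁻¹) ^ 2 := by
  have hD : 0 < (q - q⁻¹) ^ 2 := pow_two_pos_of_ne_zero (qq_ne hq hq1)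
  unfold qint
  rw [div_mul_div_comm, ← sq]
  gcongr ?_ / _
  rw [Real.rpow_add hq, neg_add, Real.rpow_add hq]
  nlinarith [mul_pos (Real.rpow_pos_of_pos hq a) (Real.rpow_pos_of_pos hq (-b)),
    mul_pos (Real.rpow_pos_of_pos hq (-a)) (Real.rpow_pos_of_pos hq b)]

lemma inv_rpow' {q : ℝ} (hq : 0 < q) (x : ℝ) : (q⁻¹) ^ x = q ^ (-x) := by
  rw [Real.inv_rpow hq.le, Real.rpow_neg hq.le]

lemma plus_eq {q : ℝ} (hq : 0 < q) (x : ℝ) :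
    q ^ x + q ^ (-x) = (max q q⁻¹) ^ x + (max q q⁻¹) ^ (-x) := by
  rcases max_choice q q⁻¹ with h | h <;> rw [h]
  rw [inv_rpow' hq, inv_rpow' hq, neg_neg, add_comm]

lemma sq_eq' {q : ℝ} (hq : 0 < q) (x : ℝ) :
    (q ^ x - q ^ (-x)) ^ 2 = ((max q q⁻¹) ^ x - (max q q⁻¹) ^ (-x)) ^ 2 := by
  rcases max_choice q q⁻¹ with h | h <;> rw [h]
  rw [inv_rpow' hq, inv_rpow' hq, neg_neg]; ring

lemma rpow_le_plus {q : ℝ} (hq : 0 < q) (x : ℝ) :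
    q ^ x ≤ (max q q⁻¹) ^ x + (max q q⁻¹) ^ (-x) := by
  rw [← plus_eq hq]
  have := Real.rpow_pos_of_pos hq (-x)
  linarith

/-- Lemma 7.9 for `X₊`: the symbol `σ_{mn} = √([l−n]_q [l+n+1]_q) δ_{m,n+1}` on the
spin-`l` representation (`l = n/2`, matrix indices `m, n ∈ {−l,…,l}` parametrised by
`j, k ∈ {0,…,2l}` via `m = j − l`, `n = k − l`) satisfies
`∑_m q^{2m} ∑_n |σ_{mn}|² ≤ C [2l+1]_q²` with `C` depending only on `q`. -/
theorem symbol_Xplus_HS_bound (q : ℝ) (hq : 0 < q) (hq1 : q ≠ 1) :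
    ∃ C > (0 : ℝ), ∀ n : ℕ,
      (∑ j : Fin (n + 1), q ^ (2 * (((j : ℕ) : ℝ) - (n : ℝ) / 2)) *
        ∑ k : Fin (n + 1),
          (if (j : ℕ) = (k : ℕ) + 1 then
              Real.sqrt (qint q ((n : ℝ) / 2 - (((k : ℕ) : ℝ) - (n : ℝ) / 2)) *
                qint q ((n : ℝ) / 2 + (((k : ℕ) : ℝ) - (n : ℝ) / 2) + 1))
            else 0) ^ 2)
        ≤ C * qint q ((n : ℝ) + 1) ^ 2 := by
  set b := max q q⁻¹ with hbdef
  have hb0 : 0 < b := lt_of_lt_of_le hq (le_max_left _ _)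
  have hb1 : 1 < b := by
    rcases lt_or_gt_of_ne hq1 with h | h
    · exact lt_of_lt_of_le ((one_lt_inv₀ hq).mpr h) (le_max_right _ _)
    · exact lt_of_lt_of_le h (le_max_left _ _)
  have hD : 0 < (q - q⁻¹) ^ 2 := pow_two_pos_of_ne_zero (qq_ne hq hq1)
  have hbb : 0 < b ^ 2 - 1 := by nlinarith
  refine ⟨4 * b ^ 5 / (b ^ 2 - 1) ^ 3, by positivity, fun n => ?_⟩
  set t := b ^ ((n : ℝ) - 1) with htdef
  have ht0 : 0 < t := Real.rpow_pos_of_pos hb0 _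
  set K := (q ^ ((n : ℝ) + 1) + q ^ (-((n : ℝ) + 1))) / (q - q⁻¹) ^ 2 with hKdef
  have hK0 : 0 ≤ K := by
    have := Real.rpow_pos_of_pos hq ((n : ℝ) + 1)
    have := Real.rpow_pos_of_pos hq (-((n : ℝ) + 1))
    positivity
  -- Step 1: bound each inner sum by K
  have step1 : (∑ j : Fin (n + 1), q ^ (2 * (((j : ℕ) : ℝ) - (n : ℝ) / 2)) *
        ∑ k : Fin (n + 1),
          (if (j : ℕ) = (k : ℕ) + 1 then
              Real.sqrt (qint q ((n : ℝ) / 2 - (((k : ℕ) : ℝ) - (n : ℝ) / 2)) *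
                qint q ((n : ℝ) / 2 + (((k : ℕ) : ℝ) - (n : ℝ) / 2) + 1))
            else 0) ^ 2)
      ≤ ∑ j : Fin (n + 1), q ^ (2 * (((j : ℕ) : ℝ) - (n : ℝ) / 2)) * K := by
    apply Finset.sum_le_sum
    intro j _
    apply mul_le_mul_of_nonneg_left _ (Real.rpow_pos_of_pos hq _).le
    by_cases hj : (j : ℕ) = 0
    · have hz : (∑ k : Fin (n + 1),
          (if (j : ℕ) = (k : ℕ) + 1 then
              Real.sqrt (qint q ((n : ℝ) / 2 - (((k : ℕ) : ℝ) - (n : ℝ) / 2)) *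
                qint q ((n : ℝ) / 2 + (((k : ℕ) : ℝ) - (n : ℝ) / 2) + 1))
            else 0) ^ 2) = 0 := by
        apply Finset.sum_eq_zero
        intro k _
        rw [if_neg (by omega)]
        simp
      rw [hz]; exact hK0
    · obtain ⟨i, hi⟩ := Nat.exists_eq_succ_of_ne_zero hj
      have hin : i < n + 1 := by have := j.isLt; omega
      have hs : (∑ k : Fin (n + 1),
          (if (j : ℕ) = (k : ℕ) + 1 then
              Real.sqrt (qint q ((n : ℝ) / 2 - (((k : ℕ) : ℝ) - (n : ℝ) / 2)) *
                qint q ((n : ℝ) / 2 + (((k : ℕ) : ℝ) - (n : ℝ) / 2) + 1))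
            else 0) ^ 2)
          = (if (j : ℕ) = i + 1 then
              Real.sqrt (qint q ((n : ℝ) / 2 - (((i : ℕ) : ℝ) - (n : ℝ) / 2)) *
                qint q ((n : ℝ) / 2 + (((i : ℕ) : ℝ) - (n : ℝ) / 2) + 1))
            else 0) ^ 2 := by
        rw [Finset.sum_eq_single (⟨i, hin⟩ : Fin (n + 1))]
        · intro k _ hk
          have hki : (k : ℕ) ≠ i := fun hh => hk (Fin.ext hh)
          rw [if_neg (by omega)]
          simp
        · intro h; exact absurd (Finset.mem_univ _) h
      rw [hs, if_pos hi]
      rw [show (n : ℝ) / 2 - (((i : ℕ) : ℝ) - (n : ℝ) / 2) = (n : ℝ) - (i : ℕ) from by ring,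
        show (n : ℝ) / 2 + (((i : ℕ) : ℝ) - (n : ℝ) / 2) + 1 = ((i : ℕ) : ℝ) + 1 from by ring]
      have hile : (i : ℕ) ≤ n := by omega
      have h1 : 0 ≤ qint q ((n : ℝ) - (i : ℕ)) := by
        apply qint_nonneg hq
        have : ((i : ℕ) : ℝ) ≤ (n : ℝ) := by exact_mod_cast hile
        linarith
      have h2 : 0 ≤ qint q (((i : ℕ) : ℝ) + 1) := qint_nonneg hq (by positivity)
      rw [Real.sq_sqrt (mul_nonneg h1 h2)]
      have hkey := qint_mul_le hq hq1 ((n : ℝ) - (i : ℕ)) (((i : ℕ) : ℝ) + 1)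
      rw [show ((n : ℝ) - (i : ℕ)) + (((i : ℕ) : ℝ) + 1) = (n : ℝ) + 1 from by ring] at hkey
      exact hkey
  -- Step 3: bound the weight sum
  have hsum : (∑ j : Fin (n + 1), q ^ (2 * (((j : ℕ) : ℝ) - (n : ℝ) / 2)))
      ≤ 2 * (t * b ^ 3) / (b ^ 2 - 1) := by
    have hb2ne : (b ^ 2 : ℝ) ≠ 1 := by nlinarith
    have part1 : (∑ j : Fin (n + 1), b ^ (2 * (((j : ℕ) : ℝ) - (n : ℝ) / 2)))
        ≤ t * b ^ 3 / (b ^ 2 - 1) := by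
      have e : ∀ j : Fin (n + 1), b ^ (2 * (((j : ℕ) : ℝ) - (n : ℝ) / 2))
          = b ^ (-(n : ℝ)) * (b ^ 2) ^ (j : ℕ) := by
        intro j
        rw [show 2 * (((j : ℕ) : ℝ) - (n : ℝ) / 2) = -(n : ℝ) + ((2 * (j : ℕ) : ℕ) : ℝ) from by
          push_cast; ring, Real.rpow_add hb0, Real.rpow_natCast, pow_mul]
      rw [Finset.sum_congr rfl (fun j _ => e j), ← Finset.mul_sum,
        Fin.sum_univ_eq_sum_range (fun j => (b ^ 2) ^ j) (n + 1), geom_sum_eq hb2ne]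
      have hXeq : b ^ (-(n : ℝ)) * ((b ^ 2) ^ (n + 1)) = t * b ^ 3 := by
        rw [← pow_mul, ← Real.rpow_natCast b (2 * (n + 1)), ← Real.rpow_add hb0,
          htdef, ← Real.rpow_natCast b 3, ← Real.rpow_add hb0]
        congr 1; push_cast; ring
      rw [← mul_div_assoc]
      have hpos := Real.rpow_pos_of_pos hb0 (-(n : ℝ))
      have expand : b ^ (-(n : ℝ)) * ((b ^ 2) ^ (n + 1) - 1)
          = t * b ^ 3 - b ^ (-(n : ℝ)) := by
        rw [mul_sub, hXeq, mul_one]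
      rw [expand]
      apply (div_le_div_iff_of_pos_right hbb).mpr
      linarith
    have part2 : (∑ j : Fin (n + 1), b ^ (-(2 * (((j : ℕ) : ℝ) - (n : ℝ) / 2))))
        ≤ t * b ^ 3 / (b ^ 2 - 1) := by
      have e : ∀ j : Fin (n + 1), b ^ (-(2 * (((j : ℕ) : ℝ) - (n : ℝ) / 2)))
          = b ^ (n : ℝ) * (b ^ (-2 : ℝ)) ^ (j : ℕ) := by
        intro j
        rw [show (b ^ (-2 : ℝ)) ^ (j : ℕ) = b ^ ((-2 : ℝ) * ((j : ℕ) : ℝ)) from by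
          rw [← Real.rpow_natCast (b ^ (-2 : ℝ)) (j : ℕ), ← Real.rpow_mul hb0.le],
          ← Real.rpow_add hb0]
        congr 1; ring
      have hr0 : (0 : ℝ) < b ^ (-2 : ℝ) := Real.rpow_pos_of_pos hb0 _
      have hr1 : b ^ (-2 : ℝ) < 1 := Real.rpow_lt_one_of_one_lt_of_neg hb1 (by norm_num)
      have hrval : b ^ (-2 : ℝ) = (b ^ 2)⁻¹ := by
        rw [show (-2 : ℝ) = -((2 : ℕ) : ℝ) from by norm_num, Real.rpow_neg hb0.le,
          Real.rpow_natCast]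
      have geo : (∑ i ∈ Finset.range (n + 1), (b ^ (-2 : ℝ)) ^ i) ≤ 1 / (1 - b ^ (-2 : ℝ)) := by
        have hp : (0 : ℝ) < (b ^ (-2 : ℝ)) ^ (n + 1) := pow_pos hr0 _
        rw [geom_sum_eq hr1.ne,
          show ((b ^ (-2:ℝ)) ^ (n+1) - 1) / (b ^ (-2:ℝ) - 1)
            = (1 - (b ^ (-2:ℝ)) ^ (n+1)) / (1 - b ^ (-2:ℝ)) from by rw [← neg_div_neg_eq]; ring_nf]
        gcongr
        · linarith
      rw [Finset.sum_congr rfl (fun j _ => e j), ← Finset.mul_sum,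
        Fin.sum_univ_eq_sum_range (fun j => (b ^ (-2 : ℝ)) ^ j) (n + 1)]
      have hbn : b ^ (n : ℝ) = t * b := by
        rw [htdef, show (n : ℝ) = ((n : ℝ) - 1) + 1 from by ring, Real.rpow_add hb0,
          Real.rpow_one]
        norm_num
      calc b ^ (n : ℝ) * (∑ i ∈ Finset.range (n + 1), (b ^ (-2 : ℝ)) ^ i)
          ≤ b ^ (n : ℝ) * (1 / (1 - b ^ (-2 : ℝ))) := by
            apply mul_le_mul_of_nonneg_left geo (Real.rpow_pos_of_pos hb0 _).le
        _ = t * b ^ 3 / (b ^ 2 - 1) := by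
            rw [hbn, hrval]
            have hb2 : (b ^ 2 : ℝ) ≠ 0 := by positivity
            field_simp
    calc (∑ j : Fin (n + 1), q ^ (2 * (((j : ℕ) : ℝ) - (n : ℝ) / 2)))
        ≤ ∑ j : Fin (n + 1), (b ^ (2 * (((j : ℕ) : ℝ) - (n : ℝ) / 2))
            + b ^ (-(2 * (((j : ℕ) : ℝ) - (n : ℝ) / 2)))) :=
          Finset.sum_le_sum (fun j _ => rpow_le_plus hq _)
      _ = (∑ j : Fin (n + 1), b ^ (2 * (((j : ℕ) : ℝ) - (n : ℝ) / 2)))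
            + ∑ j : Fin (n + 1), b ^ (-(2 * (((j : ℕ) : ℝ) - (n : ℝ) / 2))) :=
          Finset.sum_add_distrib
      _ ≤ t * b ^ 3 / (b ^ 2 - 1) + t * b ^ 3 / (b ^ 2 - 1) := add_le_add part1 part2
      _ = 2 * (t * b ^ 3) / (b ^ 2 - 1) := by ring
  -- Step 4: bound K
  have hbn1 : b ^ ((n : ℝ) + 1) = t * b ^ 2 := by
    rw [htdef, ← Real.rpow_natCast b 2, ← Real.rpow_add hb0]
    congr 1; push_cast; ring
  have step4 : K ≤ 2 * (t * b ^ 2) / (q - q⁻¹) ^ 2 := by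
    rw [hKdef, plus_eq hq, ← hbdef]
    gcongr
    have h1 : b ^ (-((n : ℝ) + 1)) ≤ b ^ ((n : ℝ) + 1) := by
      apply Real.rpow_le_rpow_of_exponent_le hb1.le
      have : (0 : ℝ) ≤ (n : ℝ) := Nat.cast_nonneg n
      linarith
    rw [hbn1] at h1 ⊢
    linarith
  -- Step 5: lower bound on qint squared
  have hlower : (t * (b ^ 2 - 1)) ^ 2 / (q - q⁻¹) ^ 2 ≤ qint q ((n : ℝ) + 1) ^ 2 := by
    rw [qint, div_pow, sq_eq' hq, ← hbdef]
    gcongr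
    have h1 : b ^ (-((n : ℝ) + 1)) ≤ b ^ ((n : ℝ) - 1) := by
      apply Real.rpow_le_rpow_of_exponent_le hb1.le
      have : (0 : ℝ) ≤ (n : ℝ) := Nat.cast_nonneg n
      linarith
    rw [← htdef] at h1
    have h2 : t * (b ^ 2 - 1) ≤ b ^ ((n : ℝ) + 1) - b ^ (-((n : ℝ) + 1)) := by
      rw [hbn1]
      nlinarith
    exact h2
  -- Combine
  calc (∑ j : Fin (n + 1), q ^ (2 * (((j : ℕ) : ℝ) - (n : ℝ) / 2)) *
        ∑ k : Fin (n + 1),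
          (if (j : ℕ) = (k : ℕ) + 1 then
              Real.sqrt (qint q ((n : ℝ) / 2 - (((k : ℕ) : ℝ) - (n : ℝ) / 2)) *
                qint q ((n : ℝ) / 2 + (((k : ℕ) : ℝ) - (n : ℝ) / 2) + 1))
            else 0) ^ 2)
      ≤ ∑ j : Fin (n + 1), q ^ (2 * (((j : ℕ) : ℝ) - (n : ℝ) / 2)) * K := step1
    _ = (∑ j : Fin (n + 1), q ^ (2 * (((j : ℕ) : ℝ) - (n : ℝ) / 2))) * K :=
        (Finset.sum_mul _ _ _).symm
    _ ≤ (2 * (t * b ^ 3) / (b ^ 2 - 1)) * (2 * (t * b ^ 2) / (q - q⁻¹) ^ 2) := by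
        apply mul_le_mul hsum step4 hK0 (by positivity)
    _ = (4 * b ^ 5 / (b ^ 2 - 1) ^ 3) *
          ((t * (b ^ 2 - 1)) ^ 2 / (q - q⁻¹) ^ 2) := by
        have hE := hD
        generalize (q - q⁻¹) ^ 2 = E at hE ⊢
        have hEne : E ≠ 0 := ne_of_gt hE
        field_simp
        ring
    _ ≤ (4 * b ^ 5 / (b ^ 2 - 1) ^ 3) * qint q ((n : ℝ) + 1) ^ 2 := by
        apply mul_le_mul_of_nonneg_left hlower (by positivity)
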